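/- Let Λ_1, ..., Λ_n be i.i.d. Bernoulli(π) with π ∈ (0,1), and let γ ≥ 1 be an integer. Then limsup_{n→∞} E[ n^γ / ((n − 1 − Σ_{i=1}^n Λ_i) ∨ 1)^γ ] ≤ 1/(1−π)^γ. -/

import Mathlib

open MeasureTheory ProbabilityTheory Filter
open scoped ENNReal Classical BigOperators Topology

noncomputable section

variable {Ω : Type*}

/-- The Bernoulli(π) law on ℝ, i.e. `(1-π)δ₀ + πδ₁`. -/
def bernoulliLaw (π : ℝ) : Measure ℝ :=
  ENNReal.ofReal (1 - π) • Measure.dirac (0 : ℝ) + ENNReal.ofReal π • Measure.dirac 1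

lemma stmt7.integrable_dirac {f : ℝ → ℝ} {a : ℝ} : Integrable f (Measure.dirac a) :=
  (integrable_const (f a)).congr (ae_eq_dirac f).symm

lemma stmt7.bernoulli_integral (π : ℝ) (hπ : π ∈ Set.Ioo (0:ℝ) 1) (f : ℝ → ℝ) :
    ∫ x, f x ∂(bernoulliLaw π) = (1 - π) * f 0 + π * f 1 := by
  rw [bernoulliLaw, integral_add_measure, integral_smul_measure, integral_smul_measure,
    integral_dirac, integral_dirac, ENNReal.toReal_ofReal (by linarith [hπ.2]),
    ENNReal.toReal_ofReal (le_of_lt hπ.1)]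
  · simp [smul_eq_mul]
  · exact stmt7.integrable_dirac.smul_measure ENNReal.ofReal_ne_top
  · exact stmt7.integrable_dirac.smul_measure ENNReal.ofReal_ne_top

lemma stmt7.exp_le_quad {t : ℝ} (h0 : 0 ≤ t) (h1 : t ≤ 1/2) :
    Real.exp t ≤ 1 + t + 2 * t ^ 2 := by
  have h2 : 1 - t ≤ Real.exp (-t) := by linarith [Real.add_one_le_exp (-t)]
  have h3 : Real.exp (-t) * Real.exp t = 1 := by rw [← Real.exp_add]; simp
  have h4 : (0:ℝ) < Real.exp t := Real.exp_pos t
  nlinarith [sq_nonneg t, mul_le_mul_of_nonneg_right h2 h4.le]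

set_option maxHeartbeats 2000000 in
/-- for i.i.d. Bernoulli(π) variables and any integer `γ ≥ 1`,
`limsup_n E[ n^γ / ((n − 1 − ΣΛᵢ) ∨ 1)^γ ] ≤ 1/(1−π)^γ`. -/
theorem stmt7 [MeasurableSpace Ω] (P : Measure Ω) [IsProbabilityMeasure P]
    (Λ : ℕ → Ω → ℝ) (hmeas : ∀ i, Measurable (Λ i))
    (π : ℝ) (hπ : π ∈ Set.Ioo (0 : ℝ) 1)
    (γ : ℕ) (hγ : 1 ≤ γ)
    (hiid : iIndepFun Λ P)
    (hlaw : ∀ i, Measure.map (Λ i) P = bernoulliLaw π) :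
    limsup (fun n : ℕ =>
        ∫ ω, (n : ℝ) ^ γ /
          (max ((n : ℝ) - 1 - ∑ i ∈ Finset.range n, Λ i ω) 1) ^ γ ∂P)
      atTop ≤ 1 / (1 - π) ^ γ := by
  set a : ℕ → ℝ := fun n : ℕ =>
      ∫ ω, (n : ℝ) ^ γ /
        (max ((n : ℝ) - 1 - ∑ i ∈ Finset.range n, Λ i ω) 1) ^ γ ∂P with ha_def
  -- a.e. the Λ i take values in [0,1]
  have hae : ∀ᵐ ω ∂P, ∀ i, Λ i ω ∈ Set.Icc (0:ℝ) 1 := by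
    rw [ae_all_iff]
    intro i
    have h1 : P ((Λ i) ⁻¹' (Set.Icc (0:ℝ) 1)ᶜ) = 0 := by
      rw [← Measure.map_apply (hmeas i) (measurableSet_Icc.compl), hlaw, bernoulliLaw]
      simp [Measure.dirac_apply' _ measurableSet_Icc.compl,
        Set.indicator_of_notMem, Set.mem_Icc]
    filter_upwards [measure_eq_zero_iff_ae_notMem.mp h1] with ω hω
    simpa using hω
  -- mgf of each Λ i
  have hmgf : ∀ (i : ℕ) (t : ℝ), mgf (Λ i) P t = (1 - π) + π * Real.exp t := by
    intro i t
    have h : mgf (Λ i) P t = ∫ x, Real.exp (t * x) ∂(Measure.map (Λ i) P) := by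
      rw [integral_map (hmeas i).aemeasurable
        (Continuous.aestronglyMeasurable (by continuity))]
      rfl
    rw [h, hlaw, stmt7.bernoulli_integral π hπ]
    simp
  -- key bound for each fixed ε
  have key : ∀ ε : ℝ, 0 < ε → ε < 1 - π →
      limsup a atTop ≤ 1 / (1 - π - ε) ^ γ := by
    intro ε hε hε'
    set c : ℝ := 1 - π - ε with hc_def
    have hc : 0 < c := by linarith
    set t : ℝ := min ε 1 / 4 with ht_def
    have ht0 : 0 < t := by positivity
    have ht1 : t ≤ 1/2 := by
      have := min_le_right ε 1; rw [ht_def]; linarith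
    have htε : 2 * t < ε := by
      have := min_le_left ε 1; rw [ht_def]; linarith
    set r : ℝ := Real.exp (t * (2 * t - ε)) with hr_def
    have hr0 : 0 ≤ r := (Real.exp_pos _).le
    have hr1 : r < 1 := by
      rw [hr_def, Real.exp_lt_one_iff]
      nlinarith [mul_pos ht0 (show (0:ℝ) < ε - 2*t by linarith)]
    -- Chernoff bound
    have hchern : ∀ n : ℕ,
        (P {ω | (n:ℝ) * (π + ε) ≤ ∑ i ∈ Finset.range n, Λ i ω}).toReal ≤ r ^ n := by
      intro n
      have hSfun : ∀ ω, (∑ i ∈ Finset.range n, Λ i) ω = ∑ i ∈ Finset.range n, Λ i ω :=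
        fun ω => Finset.sum_apply ω (Finset.range n) Λ
      have hSmeas : Measurable (∑ i ∈ Finset.range n, Λ i) := by
        simpa [funext hSfun] using Finset.measurable_sum (Finset.range n) (fun i _ => hmeas i)
      have hint : Integrable (fun ω => Real.exp (t * (∑ i ∈ Finset.range n, Λ i) ω)) P := by
        refine Integrable.mono' (integrable_const (Real.exp (t * n)))
          ((hSmeas.const_mul t).exp.aestronglyMeasurable) ?_
        filter_upwards [hae] with ω hω
        rw [Real.norm_eq_abs, abs_of_pos (Real.exp_pos _), Real.exp_le_exp, hSfun]
        refine mul_le_mul_of_nonneg_left ?_ ht0.le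
        calc ∑ i ∈ Finset.range n, Λ i ω ≤ ∑ i ∈ Finset.range n, (1:ℝ) :=
              Finset.sum_le_sum fun i _ => (hω i).2
          _ = n := by simp
      have h1 := measure_ge_le_exp_mul_mgf (μ := P) (X := ∑ i ∈ Finset.range n, Λ i)
        ((n:ℝ) * (π + ε)) ht0.le hint
      have h2 : mgf (∑ i ∈ Finset.range n, Λ i) P t = ((1 - π) + π * Real.exp t) ^ n := by
        rw [hiid.mgf_sum hmeas (Finset.range n)]
        simp [hmgf]
      have h3 : {ω | (n:ℝ) * (π + ε) ≤ ∑ i ∈ Finset.range n, Λ i ω}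
          = {ω | (n:ℝ) * (π + ε) ≤ (∑ i ∈ Finset.range n, Λ i) ω} := by
        ext ω; simp [hSfun]
      rw [h3]
      refine h1.trans ?_
      rw [h2]
      have hbase : Real.exp (-t * (π + ε)) * ((1 - π) + π * Real.exp t) ≤ r := by
        have hq : (1 - π) + π * Real.exp t ≤ Real.exp (π * t + 2 * t ^ 2) := by
          have := stmt7.exp_le_quad ht0.le ht1
          have h5 : (1 - π) + π * Real.exp t ≤ 1 + (π * t + 2 * t ^ 2) := by
            nlinarith [hπ.1, hπ.2, sq_nonneg t]
          linarith [Real.add_one_le_exp (π * t + 2 * t ^ 2)]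
        calc Real.exp (-t * (π + ε)) * ((1 - π) + π * Real.exp t)
            ≤ Real.exp (-t * (π + ε)) * Real.exp (π * t + 2 * t ^ 2) :=
              mul_le_mul_of_nonneg_left hq (Real.exp_pos _).le
          _ = r := by rw [← Real.exp_add, hr_def]; ring_nf
      calc Real.exp (-t * ((n:ℝ) * (π + ε))) * ((1 - π) + π * Real.exp t) ^ n
          = (Real.exp (-t * (π + ε)) * ((1 - π) + π * Real.exp t)) ^ n := by
            rw [mul_pow, ← Real.exp_nat_mul]; ring_nf
        _ ≤ r ^ n := by
            refine pow_le_pow_left₀ ?_ hbase n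
            exact mul_nonneg (Real.exp_pos _).le
              (by nlinarith [Real.exp_pos t, hπ.1, hπ.2])
    -- the comparison sequence
    set b : ℕ → ℝ := fun n => (n:ℝ) ^ γ / ((n:ℝ) * c - 1) ^ γ + (n:ℝ) ^ γ * r ^ n with hb_def
    -- eventual bound a ≤ b
    have hab : ∀ᶠ n in atTop, a n ≤ b n := by
      rw [eventually_atTop]
      refine ⟨⌈2 / c⌉₊, fun n hn => ?_⟩
      have hn2 : (2:ℝ) / c ≤ (n:ℝ) := le_trans (Nat.le_ceil _) (by exact_mod_cast hn)
      have hd1 : 1 ≤ (n:ℝ) * c - 1 := by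
        have : 2 ≤ (n:ℝ) * c := by
          rw [div_le_iff₀ hc] at hn2; linarith
        linarith
      have hd0 : (0:ℝ) < (n:ℝ) * c - 1 := by linarith
      set B : Set Ω := {ω | (n:ℝ) * (π + ε) ≤ ∑ i ∈ Finset.range n, Λ i ω} with hB_def
      have hSmeas : Measurable (fun ω => ∑ i ∈ Finset.range n, Λ i ω) :=
        Finset.measurable_sum (Finset.range n) (fun i _ => hmeas i)
      have hBmeas : MeasurableSet B := measurableSet_le measurable_const hSmeas
      have hfmeas : Measurable (fun ω => (n : ℝ) ^ γ /
          (max ((n : ℝ) - 1 - ∑ i ∈ Finset.range n, Λ i ω) 1) ^ γ) :=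
        measurable_const.div (((measurable_const.sub hSmeas).max measurable_const).pow_const γ)
      -- pointwise bound
      have hpt : ∀ ω, (n : ℝ) ^ γ /
          (max ((n : ℝ) - 1 - ∑ i ∈ Finset.range n, Λ i ω) 1) ^ γ
          ≤ (n:ℝ) ^ γ / ((n:ℝ) * c - 1) ^ γ + B.indicator (fun _ => (n:ℝ)^γ) ω := by
        intro ω
        by_cases hω : ω ∈ B
        · have h6 : (n : ℝ) ^ γ /
              (max ((n : ℝ) - 1 - ∑ i ∈ Finset.range n, Λ i ω) 1) ^ γ ≤ (n:ℝ)^γ := by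
            apply div_le_self (by positivity)
            exact one_le_pow₀ (le_max_right _ _)
          have h7 : (0:ℝ) ≤ (n:ℝ) ^ γ / ((n:ℝ) * c - 1) ^ γ := by positivity
          rw [Set.indicator_of_mem hω]
          linarith
        · rw [Set.indicator_of_notMem hω, add_zero]
          have hS : ∑ i ∈ Finset.range n, Λ i ω < (n:ℝ) * (π + ε) := by
            simpa [hB_def] using hω
          have h8 : (n:ℝ) * c - 1 ≤ max ((n : ℝ) - 1 - ∑ i ∈ Finset.range n, Λ i ω) 1 := by
            refine le_trans ?_ (le_max_left _ _)
            rw [hc_def]; nlinarith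
          apply div_le_div_of_nonneg_left (by positivity) (by positivity)
          exact pow_le_pow_left₀ hd0.le h8 γ
      -- integrate the pointwise bound
      have hint_rhs : Integrable (fun ω => (n:ℝ) ^ γ / ((n:ℝ) * c - 1) ^ γ
          + B.indicator (fun _ => (n:ℝ)^γ) ω) P :=
        (integrable_const _).add ((integrable_const _).indicator hBmeas)
      have hint_lhs : Integrable (fun ω => (n : ℝ) ^ γ /
          (max ((n : ℝ) - 1 - ∑ i ∈ Finset.range n, Λ i ω) 1) ^ γ) P := by
        refine Integrable.mono' (integrable_const ((n:ℝ)^γ)) hfmeas.aestronglyMeasurable ?_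
        refine Eventually.of_forall fun ω => ?_
        rw [Real.norm_eq_abs, abs_of_nonneg (by positivity)]
        apply div_le_self (by positivity)
        exact one_le_pow₀ (le_max_right _ _)
      have h9 : a n ≤ ∫ ω, ((n:ℝ) ^ γ / ((n:ℝ) * c - 1) ^ γ
          + B.indicator (fun _ => (n:ℝ)^γ) ω) ∂P := by
        rw [ha_def]
        exact integral_mono hint_lhs hint_rhs hpt
      rw [integral_add (integrable_const _) ((integrable_const _).indicator hBmeas),
        integral_const, integral_indicator_const _ hBmeas] at h9
      simp only [Measure.real, measure_univ, ENNReal.toReal_one, smul_eq_mul, one_smul] at h9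
      refine h9.trans ?_
      rw [hb_def]
      have h10 : (P B).toReal * (n:ℝ)^γ ≤ (n:ℝ)^γ * r^n := by
        rw [mul_comm]
        exact mul_le_mul_of_nonneg_left (hchern n) (by positivity)
      linarith
    -- limit of b
    have hb_lim : Tendsto b atTop (𝓝 (1 / c ^ γ + 0)) := by
      refine Tendsto.add ?_ (tendsto_pow_const_mul_const_pow_of_lt_one γ hr0 hr1)
      have h11 : Tendsto (fun n : ℕ => (n:ℝ) / ((n:ℝ) * c - 1)) atTop (𝓝 (1 / c)) := by
        have h12 : Tendsto (fun n : ℕ => 1 / (c - 1 / (n:ℝ))) atTop (𝓝 (1 / c)) := by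
          refine Tendsto.div tendsto_const_nhds ?_ hc.ne'
          simpa using (tendsto_const_nhds : Tendsto (fun _ : ℕ => c) atTop (𝓝 c)).sub tendsto_one_div_atTop_nhds_zero_nat
        refine h12.congr' ?_
        filter_upwards [eventually_ge_atTop 1] with n hn
        have hn0 : (0:ℝ) < (n:ℝ) := by exact_mod_cast hn
        rw [show c - 1/(n:ℝ) = ((n:ℝ)*c-1)/(n:ℝ) by field_simp, one_div_div]
      simpa [div_pow] using h11.pow γ
    have hL : limsup a atTop ≤ 1 / c ^ γ := by
      have hbd : IsBoundedUnder (· ≤ ·) atTop b := hb_lim.isBoundedUnder_le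
      have hcb : IsCoboundedUnder (· ≤ ·) atTop a := by
        refine isCoboundedUnder_le_of_le atTop (x := 0) fun n => ?_
        exact integral_nonneg fun ω => by positivity
      calc limsup a atTop ≤ limsup b atTop := limsup_le_limsup hab hcb hbd
        _ = 1 / c ^ γ + 0 := hb_lim.limsup_eq
        _ = 1 / c ^ γ := add_zero _
    rw [hc_def] at hL
    exact hL
  -- let ε → 0 along the sequence (1-π)/(k+2)
  have hfin : Tendsto (fun k : ℕ => 1 / (1 - π - (1 - π) / ((k:ℝ) + 2)) ^ γ) atTop
      (𝓝 (1 / (1 - π) ^ γ)) := by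
    have h13 : Tendsto (fun k : ℕ => (1 - π) / ((k:ℝ) + 2)) atTop (𝓝 0) :=
      Tendsto.const_div_atTop (tendsto_atTop_add_const_right atTop 2 tendsto_natCast_atTop_atTop) _
    have h14 : Tendsto (fun k : ℕ => 1 - π - (1 - π) / ((k:ℝ) + 2)) atTop (𝓝 (1 - π)) := by
      simpa using tendsto_const_nhds.sub h13
    exact Tendsto.div tendsto_const_nhds (h14.pow γ)
      (pow_ne_zero γ (by linarith [hπ.2] : (1:ℝ) - π ≠ 0))
  refine ge_of_tendsto' hfin fun k => ?_
  refine key _ ?_ ?_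
  · have : (0:ℝ) < 1 - π := by linarith [hπ.2]
    positivity
  · have h15 : (0:ℝ) < 1 - π := by linarith [hπ.2]
    have h16 : (1 - π) / ((k:ℝ) + 2) < (1 - π) / 1 := by
      apply div_lt_div_of_pos_left h15 one_pos
      linarith [Nat.cast_nonneg (α := ℝ) k]
    simpa using h16
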